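/- Let n ≥ 1, let A and B be Hermitian n×n complex matrices all of whose eigenvalues lie in the open interval (−1,1), let f, g ∈ 𝔥, and let X be an arbitrary n×n complex matrix. Then for each choice of sign ε ∈ {+1, −1}, ‖f(A)Xg(B) + ε·X‖₂ ≤ ‖(1/(d_A d_B))·(I + |A|)X(I + |B|) + X‖₂, where I is the n×n identity matrix. -/

import Mathlib

open Matrix
open scoped ComplexOrder

/-- `f(A)` for a Hermitian matrix `A`, defined via the spectral decomposition:
`f(A) = U diag(f(λ₁),…,f(λₙ)) U*`. -/
noncomputable def herFun {n : ℕ} {A : Matrix (Fin n) (Fin n) ℂ} (hA : A.IsHermitian)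
    (f : ℂ → ℂ) : Matrix (Fin n) (Fin n) ℂ :=
  (hA.eigenvectorUnitary : Matrix (Fin n) (Fin n) ℂ) *
    Matrix.diagonal (fun i => f (hA.eigenvalues i : ℂ)) *
    star (hA.eigenvectorUnitary : Matrix (Fin n) (Fin n) ℂ)

/-- `|X| = (X*X)^{1/2}`, the positive semidefinite absolute value of a matrix. -/
noncomputable def matAbs {n : ℕ} (X : Matrix (Fin n) (Fin n) ℂ) : Matrix (Fin n) (Fin n) ℂ :=
  ((Matrix.posSemidef_conjTranspose_mul_self X).1.eigenvectorUnitary : Matrix (Fin n) (Fin n) ℂ) *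
    Matrix.diagonal ((↑) ∘ (√·) ∘ (Matrix.posSemidef_conjTranspose_mul_self X).1.eigenvalues) *
    (star (Matrix.posSemidef_conjTranspose_mul_self X).1.eigenvectorUnitary : Matrix (Fin n) (Fin n) ℂ)

/-- `d_A = min { 1 - |λⱼ| }`, the distance from the unit circle to the spectrum of a
Hermitian matrix `A` whose eigenvalues lie in `(-1,1)`. -/
noncomputable def dDist {n : ℕ} {A : Matrix (Fin n) (Fin n) ℂ} (hA : A.IsHermitian) : ℝ :=
  ⨅ i, (1 - |hA.eigenvalues i|)

/-- Membership in the class `𝔥`: analytic on the open unit disk, positive real part there,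
and value `1` at the origin. -/
def MemH (f : ℂ → ℂ) : Prop :=
  DifferentiableOn ℂ f (Metric.ball (0 : ℂ) 1) ∧
    (∀ z ∈ Metric.ball (0 : ℂ) 1, 0 < (f z).re) ∧ f 0 = 1

/-- A function `N` on `n × n` complex matrices is a unitarily invariant norm. -/
def IsUnitarilyInvariantNorm {m : Type*} [Fintype m] [DecidableEq m]
    (N : Matrix m m ℂ → ℝ) : Prop :=
  (∀ X, N X = 0 ↔ X = 0) ∧
    (∀ (c : ℂ) X, N (c • X) = ‖c‖ * N X) ∧
    (∀ X Y, N (X + Y) ≤ N X + N Y) ∧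
    (∀ (U V : Matrix.unitaryGroup m ℂ) (X : Matrix m m ℂ),
      N ((U : Matrix m m ℂ) * X * (V : Matrix m m ℂ)) = N X)
/-- The Frobenius (Hilbert–Schmidt, Schatten 2-) norm of a matrix. -/
noncomputable def frobNorm {n : ℕ} (X : Matrix (Fin n) (Fin n) ℂ) : ℝ :=
  Real.sqrt (∑ i, ∑ j, ‖X i j‖ ^ 2)

open Metric

/- ======== auxiliary lemmas ======== -/

lemma memH_norm_le {f : ℂ → ℂ} (hf : MemH f) {z : ℂ} (hz : ‖z‖ < 1) :
    ‖f z‖ ≤ (1 + ‖z‖) / (1 - ‖z‖) := by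
  obtain ⟨hd, hre, h0⟩ := hf
  have hzball : z ∈ ball (0:ℂ) 1 := by simpa [mem_ball_zero_iff] using hz
  set φ : ℂ → ℂ := fun w => (f w - 1) / (f w + 1) with hφ
  have hne : ∀ w ∈ ball (0:ℂ) 1, f w + 1 ≠ 0 := by
    intro w hw h
    have h2 := hre w hw
    have : (f w + 1).re = 0 := by rw [h]; simp
    simp [Complex.add_re] at this
    linarith
  have hφd : DifferentiableOn ℂ φ (ball (0:ℂ) 1) :=
    (hd.sub (differentiableOn_const 1)).div (hd.add (differentiableOn_const 1)) hne
  have hmaps : Set.MapsTo φ (ball (0:ℂ) 1) (ball (0:ℂ) 1) := by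
    intro w hw
    have h2 := hre w hw
    have hsq : ‖f w - 1‖ ^ 2 < ‖f w + 1‖ ^ 2 := by
      have e1 : ‖f w - 1‖ ^ 2 = Complex.normSq (f w - 1) := by
        rw [Complex.sq_norm]
      have e2 : ‖f w + 1‖ ^ 2 = Complex.normSq (f w + 1) := by
        rw [Complex.sq_norm]
      rw [e1, e2, Complex.normSq_apply, Complex.normSq_apply]
      simp only [Complex.sub_re, Complex.sub_im, Complex.add_re, Complex.add_im,
        Complex.one_re, Complex.one_im]
      nlinarith
    have hlt : ‖f w - 1‖ < ‖f w + 1‖ :=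
      lt_of_pow_lt_pow_left₀ 2 (norm_nonneg _) hsq
    have hpos : 0 < ‖f w + 1‖ := lt_of_le_of_lt (norm_nonneg _) hlt
    simp only [mem_ball_zero_iff, hφ, norm_div]
    rw [div_lt_one hpos]
    exact hlt
  have hφ0 : φ 0 = 0 := by simp [hφ, h0]
  have hschwarz : ‖φ z‖ ≤ ‖z‖ := by
    simpa using
      Complex.norm_le_norm_of_mapsTo_ball_self hφd (hmaps.mono_right ball_subset_closedBall) hφ0 (by simpa using hz)
  have ht1 : ‖φ z‖ < 1 := lt_of_le_of_lt hschwarz hz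
  have hone : (1:ℂ) - φ z ≠ 0 := by
    intro h
    have : φ z = 1 := by linear_combination -h
    rw [this] at ht1; simp at ht1
  have hfz : f z * (1 - φ z) = 1 + φ z := by
    simp only [hφ]
    field_simp [hne z hzball]
    ring
  have hfz' : ‖f z‖ = ‖(1:ℂ) + φ z‖ / ‖(1:ℂ) - φ z‖ := by
    rw [← hfz, norm_mul]
    rw [mul_div_assoc, div_self (by simpa [sub_ne_zero] using hone), mul_one]
  rw [hfz']
  have hn1 : ‖(1:ℂ) + φ z‖ ≤ 1 + ‖φ z‖ := by simpa using norm_add_le (1:ℂ) (φ z)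
  have hn2 : 1 - ‖φ z‖ ≤ ‖(1:ℂ) - φ z‖ := by simpa using norm_sub_norm_le (1:ℂ) (φ z)
  have h1 : ‖(1:ℂ) + φ z‖ / ‖(1:ℂ) - φ z‖ ≤ (1 + ‖φ z‖) / (1 - ‖φ z‖) :=
    div_le_div₀ (by positivity) hn1 (by linarith) hn2
  refine h1.trans ?_
  rw [div_le_div_iff₀ (by linarith) (by linarith)]
  nlinarith [hschwarz, norm_nonneg (φ z), norm_nonneg z]

lemma sandwich_mul {n : ℕ} {U : Matrix (Fin n) (Fin n) ℂ} (hUU : star U * U = 1)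
    (D E : Matrix (Fin n) (Fin n) ℂ) :
    (U * D * star U) * (U * E * star U) = U * (D * E) * star U := by
  simp only [Matrix.mul_assoc]
  rw [← Matrix.mul_assoc (star U) U (E * star U), hUU, Matrix.one_mul]

lemma matAbs_hermitian {n : ℕ} {A : Matrix (Fin n) (Fin n) ℂ} (hA : A.IsHermitian) :
    matAbs A = (hA.eigenvectorUnitary : Matrix (Fin n) (Fin n) ℂ) *
      Matrix.diagonal (fun i => ((|hA.eigenvalues i| : ℝ) : ℂ)) *
      star (hA.eigenvectorUnitary : Matrix (Fin n) (Fin n) ℂ) := by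
  have hAA := (Matrix.posSemidef_conjTranspose_mul_self A).1
  have e1 : matAbs A = cfc Real.sqrt (Aᴴ * A) := by
    rw [hAA.cfc_eq, Matrix.IsHermitian.cfc, Unitary.conjStarAlgAut_apply]
    rfl
  have hsa : IsSelfAdjoint A := hA
  rw [e1, hA.eq, ← pow_two, ← cfc_pow_id (R := ℝ) A 2, ← cfc_comp Real.sqrt (fun x : ℝ => x ^ 2) A,
    hA.cfc_eq, Matrix.IsHermitian.cfc, Unitary.conjStarAlgAut_apply]
  rw [show ((RCLike.ofReal : ℝ → ℂ) ∘ (Real.sqrt ∘ fun x : ℝ => x ^ 2) ∘ hA.eigenvalues) =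
    fun i => ((|hA.eigenvalues i| : ℝ) : ℂ) from funext fun i => by simp [Real.sqrt_sq_eq_abs]]

lemma frob_sq_eq_trace {n : ℕ} (M : Matrix (Fin n) (Fin n) ℂ) :
    ∑ i, ∑ j, ‖M i j‖ ^ 2 = ((Mᴴ * M).trace).re := by
  rw [Matrix.trace]
  have h : ∀ j, (Mᴴ * M).diag j = ∑ k, (starRingEnd ℂ) (M k j) * M k j := by
    intro j
    simp [Matrix.diag, Matrix.mul_apply, Matrix.conjTranspose_apply]
  rw [Complex.re_sum, Finset.sum_comm]
  refine Finset.sum_congr rfl fun j _ => ?_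
  rw [h j, Complex.re_sum]
  refine Finset.sum_congr rfl fun k _ => ?_
  rw [mul_comm, Complex.mul_conj]
  simp [Complex.sq_norm]

lemma frob_sq_conj {n : ℕ} {U V : Matrix (Fin n) (Fin n) ℂ}
    (hUU : star U * U = 1) (hVV : star V * V = 1) (M : Matrix (Fin n) (Fin n) ℂ) :
    ∑ i, ∑ j, ‖(U * M * star V) i j‖ ^ 2 = ∑ i, ∑ j, ‖M i j‖ ^ 2 := by
  rw [frob_sq_eq_trace, frob_sq_eq_trace]
  congr 1
  have h1 : (U * M * star V)ᴴ * (U * M * star V) = V * (Mᴴ * M) * star V := by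
    rw [Matrix.conjTranspose_mul, Matrix.conjTranspose_mul]
    rw [show (star V)ᴴ = V by rw [Matrix.star_eq_conjTranspose, Matrix.conjTranspose_conjTranspose]]
    simp only [Matrix.mul_assoc]
    rw [← Matrix.mul_assoc Uᴴ U, ← Matrix.star_eq_conjTranspose U, hUU, Matrix.one_mul]
  rw [h1, Matrix.trace_mul_cycle, ← Matrix.mul_assoc, hVV, Matrix.one_mul]

lemma dDist_le {n : ℕ} {A : Matrix (Fin n) (Fin n) ℂ} (hA : A.IsHermitian) (i : Fin n) :
    dDist hA ≤ 1 - |hA.eigenvalues i| :=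
  ciInf_le (Finite.bddBelow_range _) i

lemma dDist_pos {n : ℕ} (hn : 1 ≤ n) {A : Matrix (Fin n) (Fin n) ℂ} (hA : A.IsHermitian)
    (hAspec : ∀ i, |hA.eigenvalues i| < 1) : 0 < dDist hA := by
  haveI : Nonempty (Fin n) := ⟨⟨0, hn⟩⟩
  obtain ⟨i0, -, hmin⟩ := Finset.exists_min_image Finset.univ
    (fun i => 1 - |hA.eigenvalues i|) ⟨Classical.arbitrary _, Finset.mem_univ _⟩
  have heq : dDist hA = 1 - |hA.eigenvalues i0| :=
    le_antisymm (dDist_le hA i0) (le_ciInf fun i => hmin i (Finset.mem_univ i))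
  rw [heq]
  linarith [hAspec i0]

lemma scalar_bound {fv gv : ℂ} {lam mu dA dB : ℝ}
    (hdA : 0 < dA) (hdB : 0 < dB) (hdAl : dA ≤ 1 - |lam|) (hdBm : dB ≤ 1 - |mu|)
    (hfv : ‖fv‖ ≤ (1 + |lam|) / (1 - |lam|)) (hgv : ‖gv‖ ≤ (1 + |mu|) / (1 - |mu|))
    {ε : ℂ} (hε : ‖ε‖ = 1) :
    ‖fv * gv + ε‖ ≤ (dA * dB)⁻¹ * ((1 + |lam|) * (1 + |mu|)) + 1 := by
  have h1 : ‖fv * gv + ε‖ ≤ ‖fv‖ * ‖gv‖ + 1 := by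
    calc ‖fv * gv + ε‖ ≤ ‖fv * gv‖ + ‖ε‖ := norm_add_le _ _
    _ = ‖fv‖ * ‖gv‖ + 1 := by rw [norm_mul, hε]
  refine h1.trans ?_
  have hfv2 : ‖fv‖ ≤ (1 + |lam|) / dA :=
    hfv.trans (div_le_div_of_nonneg_left (by positivity) hdA hdAl)
  have hgv2 : ‖gv‖ ≤ (1 + |mu|) / dB :=
    hgv.trans (div_le_div_of_nonneg_left (by positivity) hdB hdBm)
  have h2 := mul_le_mul hfv2 hgv2 (norm_nonneg _) (by positivity)
  rw [div_mul_div_comm] at h2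
  have h3 : (1 + |lam|) * (1 + |mu|) / (dA * dB) =
      (dA * dB)⁻¹ * ((1 + |lam|) * (1 + |mu|)) := by
    rw [div_eq_mul_inv, mul_comm]
  linarith [h3 ▸ h2]


/-- **Theorem 3.3 (second inequality).** -/
theorem stmt14 {n : ℕ} (hn : 1 ≤ n)
    {A B : Matrix (Fin n) (Fin n) ℂ} (hA : A.IsHermitian) (hB : B.IsHermitian)
    (hAspec : ∀ i, |hA.eigenvalues i| < 1) (hBspec : ∀ i, |hB.eigenvalues i| < 1)
    {f g : ℂ → ℂ} (hf : MemH f) (hg : MemH g)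
    (X : Matrix (Fin n) (Fin n) ℂ) (ε : ℂ) (hε : ε = 1 ∨ ε = -1) :
    frobNorm (herFun hA f * X * herFun hB g + ε • X) ≤
      frobNorm ((dDist hA * dDist hB)⁻¹ • ((1 + matAbs A) * X * (1 + matAbs B)) + X) := by
  set U := (hA.eigenvectorUnitary : Matrix (Fin n) (Fin n) ℂ) with hUdef
  set V := (hB.eigenvectorUnitary : Matrix (Fin n) (Fin n) ℂ) with hVdef
  have hUU : star U * U = 1 := (Matrix.mem_unitaryGroup_iff').mp hA.eigenvectorUnitary.2
  have hU2 : U * star U = 1 := (Matrix.mem_unitaryGroup_iff).mp hA.eigenvectorUnitary.2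
  have hVV : star V * V = 1 := (Matrix.mem_unitaryGroup_iff').mp hB.eigenvectorUnitary.2
  have hV2 : V * star V = 1 := (Matrix.mem_unitaryGroup_iff).mp hB.eigenvectorUnitary.2
  set Y := star U * X * V with hYdef
  have hX : U * Y * star V = X := by
    rw [hYdef]
    calc U * (star U * X * V) * star V = U * star U * X * (V * star V) := by
          simp only [Matrix.mul_assoc]
    _ = X := by rw [hU2, hV2, Matrix.one_mul, Matrix.mul_one]
  set c : ℝ := (dDist hA * dDist hB)⁻¹ with hcdef
  set Df := Matrix.diagonal (fun i => f (hA.eigenvalues i : ℂ)) with hDf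
  set Dg := Matrix.diagonal (fun i => g (hB.eigenvalues i : ℂ)) with hDg
  set Da := Matrix.diagonal (fun i => ((1 + |hA.eigenvalues i| : ℝ) : ℂ)) with hDa
  set Db := Matrix.diagonal (fun i => ((1 + |hB.eigenvalues i| : ℝ) : ℂ)) with hDb
  -- LHS matrix in sandwich form
  have hL : herFun hA f * X * herFun hB g + ε • X = U * (Df * Y * Dg + ε • Y) * star V := by
    rw [Matrix.mul_add, Matrix.add_mul]
    congr 1
    · show U * Df * star U * X * (V * Dg * star V) = _
      conv_lhs => rw [← hX]
      simp only [Matrix.mul_assoc]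
      rw [← Matrix.mul_assoc (star U) U, hUU, Matrix.one_mul,
        ← Matrix.mul_assoc (star V) V, hVV, Matrix.one_mul]
    · rw [Matrix.mul_smul, Matrix.smul_mul, hX]
  -- RHS matrix in sandwich form
  have h1A : (1 : Matrix (Fin n) (Fin n) ℂ) + matAbs A = U * Da * star U := by
    rw [matAbs_hermitian hA, ← hUdef]
    have : (1 : Matrix (Fin n) (Fin n) ℂ) = U * 1 * star U := by
      rw [Matrix.mul_one, hU2]
    rw [this, ← Matrix.add_mul, ← Matrix.mul_add]
    congr 2
    rw [hDa, ← Matrix.diagonal_one, Matrix.diagonal_add]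
    congr 1
    funext i
    push_cast
    ring
  have h1B : (1 : Matrix (Fin n) (Fin n) ℂ) + matAbs B = V * Db * star V := by
    rw [matAbs_hermitian hB, ← hVdef]
    have : (1 : Matrix (Fin n) (Fin n) ℂ) = V * 1 * star V := by
      rw [Matrix.mul_one, hV2]
    rw [this, ← Matrix.add_mul, ← Matrix.mul_add]
    congr 2
    rw [hDb, ← Matrix.diagonal_one, Matrix.diagonal_add]
    congr 1
    funext i
    push_cast
    ring
  have hR : c • ((1 + matAbs A) * X * (1 + matAbs B)) + X
      = U * (c • (Da * Y * Db) + Y) * star V := by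
    rw [h1A, h1B]
    have e1 : U * Da * star U * X * (V * Db * star V) = U * (Da * Y * Db) * star V := by
      conv_lhs => rw [← hX]
      simp only [Matrix.mul_assoc]
      rw [← Matrix.mul_assoc (star U) U, hUU, Matrix.one_mul,
        ← Matrix.mul_assoc (star V) V, hVV, Matrix.one_mul]
    rw [e1]
    conv_rhs => rw [Matrix.mul_add, Matrix.add_mul, Matrix.mul_smul, Matrix.smul_mul, hX]
  rw [hL, hR, frobNorm, frobNorm, frob_sq_conj hUU hVV, frob_sq_conj hUU hVV]
  apply Real.sqrt_le_sqrt
  refine Finset.sum_le_sum fun i _ => Finset.sum_le_sum fun j _ => ?_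
  -- entrywise inequality
  have hdA := dDist_pos hn hA hAspec
  have hdB := dDist_pos hn hB hBspec
  have hcpos : 0 < c := by rw [hcdef]; positivity
  have hεn : ‖ε‖ = 1 := by rcases hε with h | h <;> simp [h]
  set lam := hA.eigenvalues i with hlam
  set mu := hB.eigenvalues j with hmu
  have hnl : ‖(lam : ℂ)‖ = |lam| := by rw [Complex.norm_real, Real.norm_eq_abs]
  have hnm : ‖(mu : ℂ)‖ = |mu| := by rw [Complex.norm_real, Real.norm_eq_abs]
  have hfb : ‖f (lam : ℂ)‖ ≤ (1 + |lam|) / (1 - |lam|) := by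
    have := memH_norm_le hf (z := (lam : ℂ)) (by rw [hnl]; exact hAspec i)
    rwa [hnl] at this
  have hgb : ‖g (mu : ℂ)‖ ≤ (1 + |mu|) / (1 - |mu|) := by
    have := memH_norm_le hg (z := (mu : ℂ)) (by rw [hnm]; exact hBspec j)
    rwa [hnm] at this
  have hkey : ‖f (lam : ℂ) * g (mu : ℂ) + ε‖ ≤ c * ((1 + |lam|) * (1 + |mu|)) + 1 :=
    scalar_bound hdA hdB (dDist_le hA i) (dDist_le hB j) hfb hgb hεn
  -- compute the entries
  have hLe : (Df * Y * Dg + ε • Y) i j = (f (lam : ℂ) * g (mu : ℂ) + ε) * Y i j := by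
    simp [hDf, hDg, Matrix.add_apply, Matrix.smul_apply, Matrix.mul_diagonal,
      Matrix.diagonal_mul, smul_eq_mul]
    ring
  have hRe : (c • (Da * Y * Db) + Y) i j
      = ((c * ((1 + |lam|) * (1 + |mu|)) + 1 : ℝ) : ℂ) * Y i j := by
    simp [hDa, hDb, Matrix.add_apply, Matrix.smul_apply, Matrix.mul_diagonal,
      Matrix.diagonal_mul, Complex.real_smul]
    push_cast
    ring
  rw [hLe, hRe, norm_mul, norm_mul]
  have hKpos : (0:ℝ) ≤ c * ((1 + |lam|) * (1 + |mu|)) + 1 := by positivity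
  have hKn : ‖((c * ((1 + |lam|) * (1 + |mu|)) + 1 : ℝ) : ℂ)‖
      = c * ((1 + |lam|) * (1 + |mu|)) + 1 := by
    rw [Complex.norm_real, Real.norm_eq_abs, abs_of_nonneg hKpos]
  rw [hKn]
  have h2 : ‖f (lam : ℂ) * g (mu : ℂ) + ε‖ * ‖Y i j‖
      ≤ (c * ((1 + |lam|) * (1 + |mu|)) + 1) * ‖Y i j‖ :=
    mul_le_mul_of_nonneg_right hkey (norm_nonneg (Y i j))
  exact pow_le_pow_left₀ (by positivity) h2 2
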